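/- For PSD matrices K_X, K_Y ∈ ℝ^{M×M}, Tr[K_X K_Y] ≤ ℱ(K_X, K_Y)², where ℱ(K_X, K_Y) = Tr[(K_X^{1/2} K_Y K_X^{1/2})^{1/2}] is the fidelity. -/

import Mathlib

open Matrix

lemma real_conjTranspose_eq {m n : ℕ} (A : Matrix (Fin m) (Fin n) ℝ) : Aᴴ = Aᵀ := rfl

lemma psd_tmul {m n : ℕ} (A : Matrix (Fin m) (Fin n) ℝ) : (Aᵀ * A).PosSemidef := by
  have h := Matrix.posSemidef_conjTranspose_mul_self A
  rwa [real_conjTranspose_eq] at h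

lemma psd_gram {m n : ℕ} (A : Matrix (Fin m) (Fin n) ℝ) : (A * Aᵀ).PosSemidef := by
  have h := Matrix.posSemidef_self_mul_conjTranspose A
  rwa [real_conjTranspose_eq] at h

open scoped ComplexOrder in
/-- The positive semidefinite square root of a positive semidefinite matrix
(the definition of `Matrix.PosSemidef.sqrt` in Mathlib of December 2024, since removed). -/
noncomputable def Matrix.PosSemidef.sqrt {n 𝕜 : Type*} [Fintype n] [RCLike 𝕜] [DecidableEq n]
    {A : Matrix n n 𝕜} (hA : A.PosSemidef) : Matrix n n 𝕜 :=
  hA.1.eigenvectorUnitary.1 * diagonal ((↑) ∘ (√·) ∘ hA.1.eigenvalues) *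
  (star hA.1.eigenvectorUnitary : Matrix n n 𝕜)

open scoped ComplexOrder in
lemma Matrix.PosSemidef.posSemidef_sqrt {n 𝕜 : Type*} [Fintype n] [RCLike 𝕜] [DecidableEq n]
    {A : Matrix n n 𝕜} (hA : A.PosSemidef) : PosSemidef hA.sqrt := by
  have h := (posSemidef_diagonal_iff (d := ((↑) ∘ (√·) ∘ hA.1.eigenvalues : n → 𝕜)).mpr
    fun i => ?_).mul_mul_conjTranspose_same
    (hA.1.eigenvectorUnitary : Matrix n n 𝕜)
  · unfold Matrix.PosSemidef.sqrt
    rwa [star_eq_conjTranspose]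
  · exact RCLike.ofReal_nonneg.mpr (Real.sqrt_nonneg _)

open scoped ComplexOrder in
lemma Matrix.PosSemidef.sqrt_mul_self {n 𝕜 : Type*} [Fintype n] [RCLike 𝕜] [DecidableEq n]
    {A : Matrix n n 𝕜} (hA : A.PosSemidef) : hA.sqrt * hA.sqrt = A := by
  unfold Matrix.PosSemidef.sqrt
  conv_rhs => rw [hA.1.spectral_theorem, Unitary.conjStarAlgAut_apply]
  have hU := Unitary.coe_star_mul_self hA.1.eigenvectorUnitary
  calc _ = (hA.1.eigenvectorUnitary : Matrix n n 𝕜) *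
        (diagonal ((↑) ∘ (√·) ∘ hA.1.eigenvalues) *
          ((star hA.1.eigenvectorUnitary : Matrix n n 𝕜) * (hA.1.eigenvectorUnitary : Matrix n n 𝕜)) *
          diagonal ((↑) ∘ (√·) ∘ hA.1.eigenvalues)) *
        (star hA.1.eigenvectorUnitary : Matrix n n 𝕜) := by simp only [mul_assoc]
    _ = _ := by
      rw [hU, mul_one, diagonal_mul_diagonal]
      congr 3
      funext i
      simp only [Function.comp_apply]
      rw [← RCLike.ofReal_mul, Real.mul_self_sqrt (hA.eigenvalues_nonneg i)]

lemma psd_sand {M : ℕ} {Kx Ky : Matrix (Fin M) (Fin M) ℝ} (hx : Kx.PosSemidef) (hy : Ky.PosSemidef) :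
    (hx.sqrt * Ky * hx.sqrt).PosSemidef := by
  have h := hy.mul_mul_conjTranspose_same hx.sqrt
  rwa [hx.posSemidef_sqrt.isHermitian.eq] at h

/-- Nuclear norm: sum of singular values, i.e. `Tr[(AᵀA)^{1/2}]`. -/
noncomputable def nuclearNorm {m n : ℕ} (A : Matrix (Fin m) (Fin n) ℝ) : ℝ :=
  (Matrix.PosSemidef.sqrt (psd_tmul A)).trace

/-- Frobenius norm. -/
noncomputable def frobNorm {m n : ℕ} (A : Matrix (Fin m) (Fin n) ℝ) : ℝ :=
  Real.sqrt (Matrix.trace (Aᵀ * A))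

/-- Fidelity `Tr[(Kx^{1/2} Ky Kx^{1/2})^{1/2}]` between PSD matrices. -/
noncomputable def fidelity {M : ℕ} {Kx Ky : Matrix (Fin M) (Fin M) ℝ}
    (hx : Kx.PosSemidef) (hy : Ky.PosSemidef) : ℝ :=
  (Matrix.PosSemidef.sqrt (psd_sand hx hy)).trace

lemma entry_sq_le {M : ℕ} {T : Matrix (Fin M) (Fin M) ℝ} (hT : T.PosSemidef) (i j : Fin M) :
    T i j ^ 2 ≤ T i i * T j j := by
  have hsym : T j i = T i j := by
    have := congrFun (congrFun hT.1.eq i) j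
    simpa [Matrix.conjTranspose_apply] using this
  have key : ∀ t : ℝ, 0 ≤ T i i * (t * t) + (2 * T i j) * t + T j j := by
    intro t
    have h := hT.dotProduct_mulVec_nonneg (t • (Pi.single i 1 : Fin M → ℝ) + Pi.single j 1)
    simp only [star_trivial, Matrix.mulVec_add, Matrix.mulVec_smul, Matrix.mulVec_single,
      dotProduct_add, add_dotProduct, smul_dotProduct,
      dotProduct_smul, single_dotProduct, smul_eq_mul, mul_one] at h
    simp only [MulOpposite.op_one, one_smul, one_mul, Matrix.col_apply, hsym] at h; nlinarith [h]
  have := discrim_le_zero key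
  rw [discrim] at this
  nlinarith [this]

theorem trace_mul_le_fidelity_sq (M : ℕ) (Kx Ky : Matrix (Fin M) (Fin M) ℝ)
    (hx : Kx.PosSemidef) (hy : Ky.PosSemidef) :
    Matrix.trace (Kx * Ky) ≤ (fidelity hx hy) ^ 2 := by
  show Matrix.trace (Kx * Ky) ≤ ((psd_sand hx hy).sqrt.trace) ^ 2
  set T := (psd_sand hx hy).sqrt with hTdef
  have hTpsd : T.PosSemidef := (psd_sand hx hy).posSemidef_sqrt
  have hTsym : ∀ i k, T k i = T i k := by
    intro i k
    have := congrFun (congrFun hTpsd.1.eq i) k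
    simpa [Matrix.conjTranspose_apply] using this
  have h1 : Matrix.trace (Kx * Ky) = Matrix.trace (T * T) := by
    rw [(psd_sand hx hy).sqrt_mul_self]
    conv_lhs => rw [← hx.sqrt_mul_self]
    rw [Matrix.trace_mul_cycle]
    rw [Matrix.trace_mul_cycle]
  rw [h1]
  have h2 : Matrix.trace (T * T) = ∑ i, ∑ k, T i k ^ 2 := by
    rw [Matrix.trace]
    simp only [Matrix.diag, Matrix.mul_apply]
    congr 1; funext i; congr 1; funext k
    rw [hTsym i k, sq]
  rw [h2]
  have h3 : (T.trace) ^ 2 = ∑ i, ∑ k, T i i * T k k := by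
    rw [Matrix.trace, sq, Finset.sum_mul_sum]
    rfl
  rw [h3]
  exact Finset.sum_le_sum fun i _ => Finset.sum_le_sum fun k _ => entry_sq_le hTpsd i k
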